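/- Let λ be an uncountable cardinal with 2^{<λ} = λ, and let A ⊆ WO_λ be a set containing, for each α < λ⁺, exactly one code of order type α. Then A does not have the λ-Perfect Set Property: A has cardinality λ⁺ > λ, and there is no topological embedding of λ→2 into A. -/

import Mathlib

universe u
open Cardinal

/-- The canonical type of order type `λ` representing the cardinal `λ` as a set of "ordinals". -/
abbrev T (lam : Cardinal.{u}) : Type u := lam.ord.ToType

/-- The binary relation on `λ` coded by `z : λ → 2` via the pairing bijection `pair`:
`(a, b) ∈ E_z` iff `z ⟨a,b⟩ = 0` (we use `false` for `0`). -/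
def Ez {lam : Cardinal.{u}} (pair : T lam × T lam ≃ T lam) (z : T lam → Bool)
    (a b : T lam) : Prop := z (pair (a, b)) = false

/-- `z` codes a well-order of order type `α`: the relation `E_z` only relates elements of a set
`S` (its field), and restricted to `S` it is a well-order of order type `α`. -/
def codesWO {lam : Cardinal.{u}} (pair : T lam × T lam ≃ T lam) (z : T lam → Bool)
    (α : Ordinal.{u}) : Prop :=
  ∃ S : Set (T lam), (∀ a b : T lam, Ez pair z a b → a ∈ S ∧ b ∈ S) ∧
    ∃ hwo : IsWellOrder S (fun a b : S => Ez pair z a.1 b.1),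
      @Ordinal.type S (fun a b : S => Ez pair z a.1 b.1) hwo = α

/-- The bounded topology on the generalised Cantor space `λ → 2`: basic open sets are
determined by fixing the values on a bounded (initial) segment of `λ`. -/
def btop (lam : Cardinal.{u}) : TopologicalSpace (T lam → Bool) :=
  TopologicalSpace.generateFrom
    {V | ∃ (b : T lam) (s : T lam → Bool), V = {x | ∀ a : T lam, a < b → x a = s a}}

/-- `A` is a λ-analytic subset of `λ → 2`: it is a continuous image of a λ-Polish space,
i.e. of a completely metrizable space of weight `≤ λ`. -/
def IsLamAnalytic (lam : Cardinal.{u}) (A : Set (T lam → Bool)) : Prop :=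
  ∃ (Y : Type u) (tY : TopologicalSpace Y) (m : MetricSpace Y),
    m.toUniformSpace.toTopologicalSpace = tY ∧ @CompleteSpace Y m.toUniformSpace ∧
    (∃ B : Set (Set Y), @TopologicalSpace.IsTopologicalBasis Y tY B ∧ #B ≤ lam) ∧
    ∃ f : Y → (T lam → Bool), @Continuous Y _ tY (btop lam) f ∧ Set.range f = A

/-- `f` is a topological embedding from `(X, τX)` to `(Y, τY)`:
injective, continuous, and inducing (every open set is the preimage of an open set). -/
def IsTopEmb {X Y : Type u} (τX : TopologicalSpace X) (τY : TopologicalSpace Y)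
    (f : X → Y) : Prop :=
  Function.Injective f ∧ @Continuous X Y τX τY f ∧
    ∀ U : Set X, @IsOpen X τX U → ∃ V : Set Y, @IsOpen Y τY V ∧ f ⁻¹' V = U

/-- Let `λ` be an uncountable cardinal with `2^{<λ} = λ` and let `A ⊆ WO_λ`
contain, for each `α < λ⁺`, exactly one code of order type `α`.  Then (assuming the
Boundedness Lemma and that continuous injective images of `λ → 2` are λ-analytic)
`A` fails the λ-PSP: `|A| = λ⁺ > λ` and there is no topological embedding of `λ → 2`
into `A`. -/
lemma codesWO_unique {lam : Cardinal.{u}} (pair : T lam × T lam ≃ T lam)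
    (z : T lam → Bool) {α β : Ordinal.{u}} (hα : codesWO pair z α)
    (hβ : codesWO pair z β) (h2 : 2 ≤ α) : α = β := by
  obtain ⟨S₁, hF₁, hwo₁, ht₁⟩ := hα
  obtain ⟨S₂, hF₂, hwo₂, ht₂⟩ := hβ
  -- two distinct elements of S₁
  have hcard : 2 ≤ #S₁ := by
    have h := Ordinal.card_le_card h2
    rw [← ht₁, Ordinal.card_type] at h
    simpa using h
  obtain ⟨a, b, hab⟩ := Cardinal.two_le_iff.1 hcard
  have htri₁ := @trichotomous _ _ hwo₁.toTrichotomous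
  have htri₂ := @trichotomous _ _ hwo₂.toTrichotomous
  -- a related pair
  obtain ⟨u, v, huv⟩ : ∃ u v : T lam, Ez pair z u v := by
    rcases htri₁ a b with h | h | h
    · exact ⟨a.1, b.1, h⟩
    · exact absurd h hab
    · exact ⟨b.1, a.1, h⟩
  have hu₁ : u ∈ S₁ := (hF₁ u v huv).1
  have hu₂ : u ∈ S₂ := (hF₂ u v huv).1
  have hsub : ∀ (S S' : Set (T lam)), (∀ a b : T lam, Ez pair z a b → a ∈ S' ∧ b ∈ S') →
      (∀ a b : ↥S, Ez pair z a.1 b.1 ∨ a = b ∨ Ez pair z b.1 a.1) →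
      u ∈ S → S ⊆ S' := by
    intro S S' hF htri hu s hs
    rcases htri ⟨s, hs⟩ ⟨u, hu⟩ with h | h | h
    · exact (hF s u h).1
    · have : s = u := congrArg Subtype.val h
      rw [this]; exact (hF u v huv).1
    · exact (hF u s h).2
  have hSeq : S₁ = S₂ :=
    le_antisymm (hsub S₁ S₂ hF₂ htri₁ hu₁) (hsub S₂ S₁ hF₁ htri₂ hu₂)
  subst hSeq
  rw [← ht₁, ← ht₂]

theorem selector_fails_PSP (lam : Cardinal.{u}) (hunc : ℵ₀ < lam)
    (hsl : ∀ μ : Cardinal.{u}, μ < lam → (2 : Cardinal.{u}) ^ μ ≤ lam)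
    (pair : T lam × T lam ≃ T lam)
    (hBound : ∀ B : Set (T lam → Bool), IsLamAnalytic lam B →
      (∀ z ∈ B, ∃ α : Ordinal.{u}, codesWO pair z α) →
      ∃ β : Ordinal.{u}, β < (Order.succ lam).ord ∧
        ∀ z ∈ B, ∀ α : Ordinal.{u}, codesWO pair z α → α ≤ β)
    (hImg : ∀ f : (T lam → Bool) → (T lam → Bool),
      @Continuous _ _ (btop lam) (btop lam) f → Function.Injective f →
      IsLamAnalytic lam (Set.range f))
    (A : Set (T lam → Bool))
    (hA1 : ∀ α : Ordinal.{u}, α < (Order.succ lam).ord →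
      ∃! z : T lam → Bool, z ∈ A ∧ codesWO pair z α)
    (hA2 : ∀ z ∈ A, ∃ α : Ordinal.{u}, α < (Order.succ lam).ord ∧ codesWO pair z α) :
    #A = Order.succ lam ∧ lam < #A ∧
      ¬ ∃ f : (T lam → Bool) → (T lam → Bool),
        IsTopEmb (btop lam) (btop lam) f ∧ Set.range f ⊆ A := by
  have hlaminf : ℵ₀ ≤ lam := hunc.le
  have hmkO : #((Order.succ lam).ord.ToType) = Order.succ lam := by
    rw [Cardinal.mk_toType, Cardinal.card_ord]
  have hshift : ∀ α : Ordinal.{u}, α < (Order.succ lam).ord →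
      2 + α < (Order.succ lam).ord := by
    intro α hα
    rw [Cardinal.lt_ord, Order.lt_succ_iff] at hα ⊢
    rw [Ordinal.card_add]
    have h1 : (2:Ordinal.{u}).card ≤ lam := by
      simpa using (Cardinal.nat_lt_aleph0 2).le.trans hlaminf
    calc (2:Ordinal.{u}).card + α.card ≤ lam + lam := add_le_add h1 hα
      _ = lam := Cardinal.add_eq_self hlaminf
  haveI : IsWellOrder (Order.succ lam).ord.ToType (· < ·) := isWellOrder_lt
  have hup : #↥A ≤ Order.succ lam := by
    rw [← hmkO]
    have hspec : ∀ z : ↥A, (hA2 z.1 z.2).choose < (Order.succ lam).ord ∧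
        codesWO pair z.1 (hA2 z.1 z.2).choose := fun z => (hA2 z.1 z.2).choose_spec
    refine Cardinal.mk_le_of_injective (f := fun z : ↥A =>
      Ordinal.enum ((· < ·) : (Order.succ lam).ord.ToType → (Order.succ lam).ord.ToType → Prop)
        ⟨(hA2 z.1 z.2).choose, by rw [Ordinal.type_toType]; exact (hspec z).1⟩) ?_
    intro z₁ z₂ h
    rw [Ordinal.enum_inj, Subtype.mk.injEq] at h
    have hα := (hspec z₁).2
    have hβ := (hspec z₂).2
    rw [h] at hα
    exact Subtype.ext <| ((hA1 _ (hspec z₂).1).unique ⟨z₁.2, hα⟩ ⟨z₂.2, hβ⟩)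
  have hdown : Order.succ lam ≤ #↥A := by
    rw [← hmkO]
    set O := (Order.succ lam).ord.ToType
    have hlt : ∀ x : O, 2 + Ordinal.typein (α := O) (· < ·) x < (Order.succ lam).ord :=
      fun x => hshift _ (Ordinal.typein_lt_self x)
    have hspec : ∀ x : O,
        (hA1 _ (hlt x)).exists.choose ∈ A ∧
        codesWO pair (hA1 _ (hlt x)).exists.choose (2 + Ordinal.typein (α := O) (· < ·) x) :=
      fun x => (hA1 _ (hlt x)).exists.choose_spec
    refine Cardinal.mk_le_of_injective (f := fun x : O =>
      (⟨(hA1 _ (hlt x)).exists.choose, (hspec x).1⟩ : ↥A)) ?_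
    intro x y h
    rw [Subtype.mk.injEq] at h
    have hx := (hspec x).2
    have hy := (hspec y).2
    rw [h] at hx
    have h2 : 2 + Ordinal.typein (α := O) (· < ·) x = 2 + Ordinal.typein (α := O) (· < ·) y :=
      codesWO_unique pair _ hx hy (le_self_add (a := (2:Ordinal.{u})))
    have h3 := (add_left_cancel_iff (a := (2:Ordinal.{u}))).1 h2
    exact Ordinal.typein_injective (α := O) (· < ·) h3
  have hmkA : #↥A = Order.succ lam := le_antisymm hup hdown
  refine ⟨hmkA, by rw [hmkA]; exact Order.lt_succ lam, ?_⟩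
  rintro ⟨f, ⟨finj, fcont, -⟩, hsub⟩
  set B := Set.range f with hB
  have hAn : IsLamAnalytic lam B := hImg f fcont finj
  have hcode : ∀ z ∈ B, ∃ α : Ordinal.{u}, codesWO pair z α := by
    intro z hz
    obtain ⟨α, -, hα⟩ := hA2 z (hsub hz)
    exact ⟨α, hα⟩
  obtain ⟨β, hβ, hbd⟩ := hBound B hAn hcode
  haveI : IsWellOrder (β + 1).ToType (· < ·) := isWellOrder_lt
  have hspec : ∀ z : ↥B, (hA2 z.1 (hsub z.2)).choose < (Order.succ lam).ord ∧
      codesWO pair z.1 (hA2 z.1 (hsub z.2)).choose :=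
    fun z => (hA2 z.1 (hsub z.2)).choose_spec
  have hle : ∀ z : ↥B, (hA2 z.1 (hsub z.2)).choose < β + 1 := by
    intro z
    rw [Ordinal.add_one_eq_succ]
    exact Order.lt_succ_iff.2 (hbd z.1 z.2 _ (hspec z).2)
  have hinj : #↥B ≤ #(β + 1).ToType := by
    refine Cardinal.mk_le_of_injective (f := fun z : ↥B =>
      Ordinal.enum ((· < ·) : (β + 1).ToType → (β + 1).ToType → Prop)
        ⟨(hA2 z.1 (hsub z.2)).choose, by rw [Ordinal.type_toType]; exact hle z⟩) ?_
    intro z₁ z₂ h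
    rw [Ordinal.enum_inj, Subtype.mk.injEq] at h
    have hα := (hspec z₁).2
    have hβ' := (hspec z₂).2
    rw [h] at hα
    exact Subtype.ext <|
      (hA1 _ (hspec z₂).1).unique ⟨hsub z₁.2, hα⟩ ⟨hsub z₂.2, hβ'⟩
  have hcard : #(β + 1).ToType ≤ lam := by
    rw [Cardinal.mk_toType, Ordinal.card_add, Ordinal.card_one]
    have h1 : β.card ≤ lam := by
      rw [Cardinal.lt_ord, Order.lt_succ_iff] at hβ
      exact hβ
    calc β.card + 1 ≤ lam + lam := add_le_add h1 (Cardinal.one_le_aleph0.trans hlaminf)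
      _ = lam := Cardinal.add_eq_self hlaminf
  have hbig : #↥B = 2 ^ lam := by
    rw [hB, Cardinal.mk_range_eq f finj, Cardinal.mk_arrow]
    simp [Cardinal.mk_toType, Cardinal.card_ord]
  have hfin : (2 : Cardinal.{u}) ^ lam ≤ lam := hbig ▸ (hinj.trans hcard)
  exact absurd hfin (Cardinal.cantor lam).not_ge
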